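/- If G is a finite group with |G/Z(G)| = pqr for primes p < q < r, then G is a primitive n-centralizer group, i.e., |Cent(G)| = |Cent(G/Z(G))|. -/

import Mathlib

def Cent (G : Type*) [Group G] : Set (Subgroup G) :=
  {H | ∃ x : G, H = Subgroup.centralizer {x}}

section Aux

open Pointwise

variable {G : Type*} [Group G]

private lemma aux_pow_left (x g c : G) (hc : ∀ y : G, Commute c y)
    (h : x * g = g * x * c) (n : ℕ) : x ^ n * g = g * x ^ n * c ^ n := by
  induction n with
  | zero => simp
  | succ n ih =>
    have hcx : c ^ n * x = x * c ^ n := ((hc x).pow_left n).eq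
    calc x ^ (n + 1) * g = x ^ n * (x * g) := by rw [pow_succ, mul_assoc]
      _ = x ^ n * g * (x * c) := by rw [h]; group
      _ = g * x ^ n * c ^ n * (x * c) := by rw [ih]
      _ = g * x ^ n * (c ^ n * x) * c := by group
      _ = g * x ^ n * (x * c ^ n) * c := by rw [hcx]
      _ = g * x ^ (n + 1) * c ^ (n + 1) := by rw [pow_succ, pow_succ]; group

private lemma aux_pow_right (x g c : G) (hc : ∀ y : G, Commute c y)
    (h : x * g = g * x * c) (n : ℕ) : x * g ^ n = g ^ n * x * c ^ n := by
  induction n with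
  | zero => simp
  | succ n ih =>
    have hcg : c * g ^ n = g ^ n * c := ((hc (g ^ n))).eq
    calc x * g ^ (n + 1) = (x * g) * g ^ n := by rw [pow_succ']; group
      _ = g * x * (c * g ^ n) := by rw [h]; group
      _ = g * x * (g ^ n * c) := by rw [hcg]
      _ = g * (x * g ^ n) * c := by group
      _ = g * (g ^ n * x * c ^ n) * c := by rw [ih]
      _ = g ^ (n + 1) * x * c ^ (n + 1) := by rw [pow_succ', pow_succ]; group

lemma key_comm [Finite G] (hsf : Squarefree (Nat.card (G ⧸ Subgroup.center G)))
    (x g : G) (h : x * g * x⁻¹ * g⁻¹ ∈ Subgroup.center G) : x * g = g * x := by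
  set Z := Subgroup.center G with hZ
  set π := QuotientGroup.mk' Z with hπdef
  by_contra hne
  set c := x * g * x⁻¹ * g⁻¹ with hcdef
  have hc1 : c ≠ 1 := by
    intro h1
    apply hne
    have : x * g * x⁻¹ * g⁻¹ * (g * x) = 1 * (g * x) := by rw [← hcdef, h1]
    calc x * g = x * g * x⁻¹ * g⁻¹ * (g * x) := by group
      _ = 1 * (g * x) := this
      _ = g * x := one_mul _
  have hcz : ∀ y : G, Commute c y := fun y => ((Subgroup.mem_center_iff.mp h) y).symm
  have hxg : x * g = g * x * c := by
    have h1 : c * (g * x) = x * g := by rw [hcdef]; group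
    rw [← h1, (hcz (g * x)).eq]
  -- if a power of x or g is central, the same power of c is 1
  have key1 : ∀ n : ℕ, x ^ n ∈ Z → c ^ n = 1 := by
    intro n hn
    have h1 : x ^ n * g = g * x ^ n * c ^ n := aux_pow_left x g c hcz hxg n
    have h2 : x ^ n * g = g * x ^ n := ((Subgroup.mem_center_iff.mp hn) g).symm
    have := h1.symm.trans h2
    calc c ^ n = (g * x ^ n)⁻¹ * (g * x ^ n * c ^ n) := by group
      _ = (g * x ^ n)⁻¹ * (g * x ^ n) := by rw [this]
      _ = 1 := by group
  have key2 : ∀ n : ℕ, g ^ n ∈ Z → c ^ n = 1 := by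
    intro n hn
    have h1 : x * g ^ n = g ^ n * x * c ^ n := aux_pow_right x g c hcz hxg n
    have h2 : x * g ^ n = g ^ n * x := (Subgroup.mem_center_iff.mp hn) x
    have := h1.symm.trans h2
    calc c ^ n = (g ^ n * x)⁻¹ * (g ^ n * x * c ^ n) := by group
      _ = (g ^ n * x)⁻¹ * (g ^ n * x) := by rw [this]
      _ = 1 := by group
  set n := orderOf (π x) with hn
  set m := orderOf (π g) with hm
  have hxn : x ^ n ∈ Z := by
    have : π (x ^ n) = 1 := by rw [map_pow, pow_orderOf_eq_one]
    rwa [← QuotientGroup.ker_mk' Z, MonoidHom.mem_ker]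
  have hgm : g ^ m ∈ Z := by
    have : π (g ^ m) = 1 := by rw [map_pow, pow_orderOf_eq_one]
    rwa [← QuotientGroup.ker_mk' Z, MonoidHom.mem_ker]
  have hdn : orderOf c ∣ n := orderOf_dvd_of_pow_eq_one (key1 n hxn)
  have hdm : orderOf c ∣ m := orderOf_dvd_of_pow_eq_one (key2 m hgm)
  have hoc : orderOf c ≠ 1 := fun h1 => hc1 (orderOf_eq_one_iff.mp h1)
  set s := (orderOf c).minFac with hsdef
  have hs : s.Prime := Nat.minFac_prime hoc
  haveI : Fact s.Prime := ⟨hs⟩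
  have hsc : s ∣ orderOf c := Nat.minFac_dvd _
  have hsn : s ∣ n := hsc.trans hdn
  have hsm : s ∣ m := hsc.trans hdm
  have hn0 : n ≠ 0 := (orderOf_pos (π x)).ne'
  have hm0 : m ≠ 0 := (orderOf_pos (π g)).ne'
  set a := (π x) ^ (n / s) with hadef
  set b := (π g) ^ (m / s) with hbdef
  have hoa : orderOf a = s := by
    rw [hadef, orderOf_pow, ← hn, Nat.gcd_eq_right (Nat.div_dvd_of_dvd hsn),
      Nat.div_div_self hsn hn0]
  have hob : orderOf b = s := by
    rw [hbdef, orderOf_pow, ← hm, Nat.gcd_eq_right (Nat.div_dvd_of_dvd hsm),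
      Nat.div_div_self hsm hm0]
  have hπc : π c = 1 := by rwa [← QuotientGroup.ker_mk' Z, MonoidHom.mem_ker] at h
  have hcomm : Commute (π x) (π g) := by
    have := congrArg π hxg
    simp only [map_mul, hπc, mul_one] at this
    exact this
  have hab : Commute a b := (hcomm.pow_pow _ _)
  -- Sylow argument in the centralizer of a
  set K := Subgroup.centralizer ({a} : Set (G ⧸ Z)) with hKdef
  have haK : a ∈ K := Subgroup.mem_centralizer_iff.mpr (by rintro h ⟨rfl⟩; rfl)
  have hbK : b ∈ K := Subgroup.mem_centralizer_iff.mpr (by rintro y ⟨rfl⟩; exact hab.eq)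
  set a' : K := ⟨a, haK⟩ with ha'
  set b' : K := ⟨b, hbK⟩ with hb'
  have hcentral : ∀ k : K, k * a' = a' * k := by
    intro k
    have := Subgroup.mem_centralizer_iff.mp k.2 a rfl
    exact Subtype.ext this.symm
  have hoa' : orderOf a' = s := by rw [ha', Subgroup.orderOf_mk, hoa]
  have hob' : orderOf b' = s := by rw [hb', Subgroup.orderOf_mk, hob]
  have hpga : IsPGroup s (Subgroup.zpowers a') :=
    IsPGroup.of_card (by rw [Nat.card_zpowers, hoa', pow_one])
  have hpgb : IsPGroup s (Subgroup.zpowers b') :=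
    IsPGroup.of_card (by rw [Nat.card_zpowers, hob', pow_one])
  obtain ⟨P, hP⟩ := hpga.exists_le_sylow
  obtain ⟨P₂, hP₂⟩ := hpgb.exists_le_sylow
  have hKQ : Nat.card K ∣ Nat.card (G ⧸ Z) := Subgroup.card_subgroup_dvd_card K
  have cardSylow : ∀ R : Sylow s K, s ∣ Nat.card R.toSubgroup → Nat.card R.toSubgroup = s := by
    intro R hsR
    obtain ⟨k, hk⟩ := R.2.exists_card_eq
    have hdvd : Nat.card R.toSubgroup ∣ Nat.card (G ⧸ Z) :=
      (Subgroup.card_subgroup_dvd_card R.toSubgroup).trans hKQ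
    have hk1 : k ≤ 1 := by
      by_contra hk2
      push_neg at hk2
      have : s * s ∣ Nat.card (G ⧸ Z) := by
        refine dvd_trans ?_ hdvd
        rw [hk, ← pow_two]
        exact pow_dvd_pow s hk2
      exact hs.one_lt.ne' (Nat.isUnit_iff.mp (hsf s this))
    interval_cases k
    · rw [hk, pow_zero] at hsR
      exact absurd (Nat.eq_one_of_dvd_one hsR) hs.one_lt.ne'
    · rw [hk, pow_one]
  have hsP : s ∣ Nat.card P.toSubgroup := by
    have := Subgroup.card_dvd_of_le hP
    rwa [Nat.card_zpowers, hoa'] at this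
  have hsP2 : s ∣ Nat.card P₂.toSubgroup := by
    have := Subgroup.card_dvd_of_le hP₂
    rwa [Nat.card_zpowers, hob'] at this
  have hPa : P.toSubgroup = Subgroup.zpowers a' :=
    (Subgroup.eq_of_le_of_card_ge hP (by rw [cardSylow P hsP, Nat.card_zpowers, hoa'])).symm
  have hP2b : P₂.toSubgroup = Subgroup.zpowers b' :=
    (Subgroup.eq_of_le_of_card_ge hP₂ (by rw [cardSylow P₂ hsP2, Nat.card_zpowers, hob'])).symm
  obtain ⟨k, hk⟩ := MulAction.exists_smul_eq K P P₂
  have hconj : MulAut.conj k a' = a' := by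
    show k * a' * k⁻¹ = a'
    rw [hcentral k, mul_assoc, mul_inv_cancel, mul_one]
  have hzb : Subgroup.zpowers b' = Subgroup.zpowers a' := by
    have h1 : (P₂ : Subgroup ↥K) = MulAut.conj k • (P : Subgroup ↥K) := by rw [← hk]; rfl
    rw [hP2b, hPa] at h1
    rw [h1, Subgroup.pointwise_smul_def]
    exact (MonoidHom.map_zpowers _ a').trans (congrArg Subgroup.zpowers hconj)
  have hbin : b' ∈ Subgroup.zpowers a' := hzb ▸ Subgroup.mem_zpowers b'
  obtain ⟨j, hj⟩ := Subgroup.mem_zpowers_iff.mp hbin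
  have hj' : a ^ j = b := by
    have := congrArg (Subtype.val) hj
    simpa using this
  have hπeq : π ((x ^ (n / s)) ^ j) = π (g ^ (m / s)) := by
    calc π ((x ^ (n / s)) ^ j) = a ^ j := by rw [map_zpow, map_pow]
      _ = b := hj'
      _ = π (g ^ (m / s)) := by rw [hbdef, map_pow]
  obtain ⟨z, hzZ, hz⟩ := (QuotientGroup.mk'_eq_mk' (N := Z)).mp hπeq
  have hcx : Commute x (g ^ (m / s)) := by
    rw [← hz]
    exact Commute.mul_right (((Commute.refl x).pow_right _).zpow_right j)
      (Subgroup.mem_center_iff.mp hzZ x)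
  have hcms : c ^ (m / s) = 1 := by
    have h1 : x * g ^ (m / s) = g ^ (m / s) * x * c ^ (m / s) :=
      aux_pow_right x g c hcz hxg (m / s)
    have h2 : g ^ (m / s) * x * 1 = g ^ (m / s) * x * c ^ (m / s) := by
      rw [mul_one, ← h1, hcx.eq]
    exact (mul_left_cancel h2).symm
  have hdms : orderOf c ∣ m / s := orderOf_dvd_of_pow_eq_one hcms
  have hss : s * s ∣ m := by
    have h1 : s * s ∣ (m / s) * s := mul_dvd_mul (hsc.trans hdms) dvd_rfl
    rwa [Nat.div_mul_cancel hsm] at h1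
  have hfin : s * s ∣ Nat.card (G ⧸ Z) := hss.trans (orderOf_dvd_natCard (π g))
  exact hs.one_lt.ne' (Nat.isUnit_iff.mp (hsf s hfin))

lemma centralizer_eq_comap [Finite G]
    (hsf : Squarefree (Nat.card (G ⧸ Subgroup.center G))) (x : G) :
    Subgroup.centralizer {x} =
      (Subgroup.centralizer {QuotientGroup.mk' (Subgroup.center G) x}).comap
        (QuotientGroup.mk' (Subgroup.center G)) := by
  set Z := Subgroup.center G
  set π := QuotientGroup.mk' Z with hπ
  ext y
  rw [Subgroup.mem_comap, Subgroup.mem_centralizer_iff, Subgroup.mem_centralizer_iff]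
  constructor
  · intro hy
    intro h hh
    rcases hh with rfl
    have := hy x rfl
    calc π x * π y = π (x * y) := (map_mul π x y).symm
      _ = π (y * x) := by rw [← this]
      _ = π y * π x := map_mul π y x
  · intro hy
    have h1 : π x * π y = π y * π x := hy (π x) rfl
    have h2 : π (x * y * x⁻¹ * y⁻¹) = 1 := by
      have e : π (x * y * x⁻¹ * y⁻¹) = (π x * π y) * (π y * π x)⁻¹ := by
        rw [map_mul, map_mul, map_mul, map_inv, map_inv, mul_inv_rev]
        group
      rw [e, h1, mul_inv_cancel]
    have h3 : x * y * x⁻¹ * y⁻¹ ∈ Z := by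
      rwa [← QuotientGroup.ker_mk' Z, MonoidHom.mem_ker]
    intro hh hhh
    rw [Set.mem_singleton_iff] at hhh
    rw [hhh]
    exact key_comm hsf x y h3

end Aux

theorem primitive_centralizer_of_central_quotient_pqr
    (G : Type*) [Group G] [Finite G] (p q r : ℕ)
    (hp : p.Prime) (hq : q.Prime) (hr : r.Prime)
    (hpq : p < q) (hqr : q < r)
    (h : Nat.card (G ⧸ Subgroup.center G) = p * q * r) :
    (Cent G).ncard = (Cent (G ⧸ Subgroup.center G)).ncard := by
  set Z := Subgroup.center G
  set π := QuotientGroup.mk' Z with hπ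
  have hsf : Squarefree (Nat.card (G ⧸ Z)) := by
    rw [h]
    rw [Nat.squarefree_mul_iff, Nat.squarefree_mul_iff]
    refine ⟨Nat.Coprime.mul ?_ ?_, ⟨?_, hp.squarefree, hq.squarefree⟩, hr.squarefree⟩
    · exact (Nat.coprime_primes hp hr).mpr (hpq.trans hqr).ne
    · exact (Nat.coprime_primes hq hr).mpr hqr.ne
    · exact (Nat.coprime_primes hp hq).mpr hpq.ne
  have hsurj : Function.Surjective π := QuotientGroup.mk'_surjective Z
  have himg : Cent G = (Subgroup.comap π) '' Cent (G ⧸ Z) := by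
    ext H
    constructor
    · rintro ⟨x, rfl⟩
      exact ⟨Subgroup.centralizer {π x}, ⟨π x, rfl⟩, (centralizer_eq_comap hsf x).symm⟩
    · rintro ⟨K, ⟨ybar, rfl⟩, rfl⟩
      obtain ⟨y, rfl⟩ := hsurj ybar
      exact ⟨y, (centralizer_eq_comap hsf y).symm⟩
  rw [himg, Set.ncard_image_of_injective _ (Subgroup.comap_injective hsurj)]
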